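/- There is a well-defined K-linear map τ: KG ⊗_{G_par} M → M with τ(g ⊗_{G_par} m) = [g]·m for every left K_par G-module M, and τ ∘ ι = id_M where ι(m) = 1 ⊗_{G_par} m. -/

import Mathlib

/-- The defining relations of Exel's semigroup `S(G)` of a group `G`:
`[1] = 1`, `[s⁻¹][s][t] = [s⁻¹][st]`, `[s][t][t⁻¹] = [st][t⁻¹]`. -/
inductive ExelRel (G : Type*) [Group G] : FreeMonoid G → FreeMonoid G → Prop
  | one : ExelRel G (FreeMonoid.of 1) 1
  | left (s t : G) : ExelRel G
      (FreeMonoid.of s⁻¹ * FreeMonoid.of s * FreeMonoid.of t)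
      (FreeMonoid.of s⁻¹ * FreeMonoid.of (s * t))
  | right (s t : G) : ExelRel G
      (FreeMonoid.of s * FreeMonoid.of t * FreeMonoid.of t⁻¹)
      (FreeMonoid.of (s * t) * FreeMonoid.of t⁻¹)

/-- The congruence on the free monoid on `G` generated by the Exel relations. -/
def ExelCon (G : Type*) [Group G] : Con (FreeMonoid G) := conGen (ExelRel G)

/-- Exel's semigroup (an inverse monoid) `S(G)` of the group `G`. -/
abbrev ExelMonoid (G : Type*) [Group G] := (ExelCon G).Quotient

/-- The canonical generator `[g]` of `S(G)`. -/
def ExelMonoid.of {G : Type*} [Group G] (g : G) : ExelMonoid G :=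
  (ExelCon G).mk' (FreeMonoid.of g)

/-- The idempotent `e_g := [g][g⁻¹]` in `S(G)`. -/
def ExelMonoid.e {G : Type*} [Group G] (g : G) : ExelMonoid G :=
  ExelMonoid.of g * ExelMonoid.of g⁻¹

/-- The partial group algebra `K_par G`: the semigroup `K`-algebra of Exel's semigroup. -/
abbrev KparG (K G : Type*) [CommRing K] [Group G] := MonoidAlgebra K (ExelMonoid G)

/-- The canonical generator `[g]` of `K_par G`. -/
noncomputable def pr (K : Type*) {G : Type*} [CommRing K] [Group G] (g : G) : KparG K G :=
  MonoidAlgebra.of K (ExelMonoid G) (ExelMonoid.of g)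

/-- The idempotent `e_g := [g][g⁻¹]` in `K_par G`. -/
noncomputable def eK (K : Type*) {G : Type*} [CommRing K] [Group G] (g : G) : KparG K G :=
  pr K g * pr K g⁻¹

open TensorProduct

/-- The group algebra `KG`. -/
abbrev KG (K G : Type*) [CommRing K] [Group G] := MonoidAlgebra K G

/-- The relation `KG`-submodule of `KG ⊗[K] M` defining `KG ⊗_{G_par} M` for a left
`K_par G`-module `M` with its induced partial action:
generated by the elements `g ⊗ [h]·m − gh ⊗ e_{h⁻¹}·m`. -/
noncomputable def glueRel (K G M : Type*) [CommRing K] [Group G]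
    [AddCommGroup M] [Module K M] [Module (KparG K G) M] [IsScalarTower K (KparG K G) M] :
    Submodule (KG K G) (KG K G ⊗[K] M) :=
  Submodule.span (KG K G) {w : KG K G ⊗[K] M | ∃ (g h : G) (m : M),
    w = MonoidAlgebra.of K G g ⊗ₜ[K] (pr K h • m) -
      MonoidAlgebra.of K G (g * h) ⊗ₜ[K] (eK K h⁻¹ • m)}

/-- The universal globalization `Λ(M) = KG ⊗_{G_par} M` of a left `K_par G`-module `M`. -/
noncomputable abbrev Glob (K G M : Type*) [CommRing K] [Group G]
    [AddCommGroup M] [Module K M] [Module (KparG K G) M] [IsScalarTower K (KparG K G) M] :=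
  KG K G ⊗[K] M ⧸ glueRel K G M

section Aux
variable {G : Type*} [Group G]

lemma ExelMonoid.of_one : ExelMonoid.of (1 : G) = 1 := by
  have : (ExelCon G) (FreeMonoid.of (1:G)) 1 := ConGen.Rel.of _ _ ExelRel.one
  simpa [ExelMonoid.of] using (Con.eq _).mpr this

lemma ExelMonoid.qleft (s t : G) :
    ExelMonoid.of s⁻¹ * ExelMonoid.of s * ExelMonoid.of t
      = ExelMonoid.of s⁻¹ * ExelMonoid.of (s * t) := by
  have : (ExelCon G) (FreeMonoid.of s⁻¹ * FreeMonoid.of s * FreeMonoid.of t)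
      (FreeMonoid.of s⁻¹ * FreeMonoid.of (s * t)) := ConGen.Rel.of _ _ (ExelRel.left s t)
  simpa [ExelMonoid.of, map_mul] using (Con.eq _).mpr this

lemma ExelMonoid.qright (s t : G) :
    ExelMonoid.of s * ExelMonoid.of t * ExelMonoid.of t⁻¹
      = ExelMonoid.of (s * t) * ExelMonoid.of t⁻¹ := by
  have : (ExelCon G) (FreeMonoid.of s * FreeMonoid.of t * FreeMonoid.of t⁻¹)
      (FreeMonoid.of (s * t) * FreeMonoid.of t⁻¹) := ConGen.Rel.of _ _ (ExelRel.right s t)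
  simpa [ExelMonoid.of, map_mul] using (Con.eq _).mpr this

lemma ExelMonoid.sandwich (h : G) :
    ExelMonoid.of h * ExelMonoid.of h⁻¹ * ExelMonoid.of h = ExelMonoid.of h := by
  have := ExelMonoid.qleft h⁻¹ h
  simpa [inv_inv, ExelMonoid.of_one] using this

lemma ExelMonoid.key (g h : G) :
    ExelMonoid.of g * ExelMonoid.of h
      = ExelMonoid.of (g * h) * (ExelMonoid.of h⁻¹ * ExelMonoid.of h) := by
  calc ExelMonoid.of g * ExelMonoid.of h
      = ExelMonoid.of g * (ExelMonoid.of h * ExelMonoid.of h⁻¹ * ExelMonoid.of h) := by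
        rw [ExelMonoid.sandwich]
    _ = ExelMonoid.of g * ExelMonoid.of h * ExelMonoid.of h⁻¹ * ExelMonoid.of h := by
        
        rw [mul_assoc, mul_assoc, mul_assoc]
    _ = ExelMonoid.of (g * h) * ExelMonoid.of h⁻¹ * ExelMonoid.of h := by
        rw [ExelMonoid.qright]
    _ = _ := by rw [mul_assoc]

end Aux
section Main
variable (K G M : Type*) [CommRing K] [Group G]
    [AddCommGroup M] [Module K M] [Module (KparG K G) M] [IsScalarTower K (KparG K G) M]

lemma pr_key {K G : Type*} [CommRing K] [Group G] (g h : G) :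
    pr K g * pr K h = pr K (g * h) * eK K h⁻¹ := by
  simp only [pr, eK, inv_inv, ← map_mul, ← mul_assoc]
  rw [ExelMonoid.key g h, mul_assoc]

variable {G}

/-- The action of `[g]` as a `K`-linear endomorphism of `M`. -/
noncomputable def actOf (g : G) : M →ₗ[K] M where
  toFun m := pr K g • m
  map_add' := smul_add _
  map_smul' c m := smul_comm (pr K g) c m

@[simp] lemma actOf_apply (g : G) (m : M) : actOf K M g m = pr K g • m := rfl

variable (G)

/-- The `K`-bilinear pairing `KG × M → M`, `(g, m) ↦ [g]·m`. -/
noncomputable def bilinB : KG K G →ₗ[K] M →ₗ[K] M :=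
  (Finsupp.lsum K fun g => LinearMap.toSpanSingleton K (M →ₗ[K] M) (actOf K M g)) ∘ₗ
    (MonoidAlgebra.coeffLinearEquiv K).toLinearMap

@[simp] lemma bilinB_single (g : G) (c : K) (m : M) :
    bilinB K G M (MonoidAlgebra.single g c) m = c • (pr K g • m) := by
  rw [bilinB, LinearMap.comp_apply]; erw [Finsupp.lsum_single]; simp [LinearMap.toSpanSingleton_apply]

end Main
/-- There is a well-defined `K`-linear map `τ : KG ⊗_{G_par} M → M` with
`τ(g ⊗ m) = [g]·m` for every left `K_par G`-module `M`, and `τ ∘ ι = id_M` where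
`ι(m) = 1 ⊗ m`. -/
theorem glob_tau_exists (K G M : Type*) [CommRing K] [Group G]
    [AddCommGroup M] [Module K M] [Module (KparG K G) M] [IsScalarTower K (KparG K G) M] :
    ∃ τ : Glob K G M →ₗ[K] M,
      (∀ (g : G) (m : M),
        τ (Submodule.Quotient.mk (MonoidAlgebra.of K G g ⊗ₜ[K] m)) = pr K g • m) ∧
      ∀ m : M, τ (Submodule.Quotient.mk ((1 : KG K G) ⊗ₜ[K] m)) = m := by
  classical
  set τ₀ : KG K G ⊗[K] M →ₗ[K] M := TensorProduct.lift (bilinB K G M) with hτ₀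
  have hof : ∀ (g : G) (m : M), τ₀ (MonoidAlgebra.of K G g ⊗ₜ[K] m) = pr K g • m := by
    intro g m
    have : (MonoidAlgebra.of K G g : KG K G) = MonoidAlgebra.single g 1 := rfl
    rw [hτ₀, TensorProduct.lift.tmul, this, bilinB_single, one_smul]
  -- the key identity, linear in `f`
  have hgen : ∀ (f : KG K G) (g h : G) (m : M),
      bilinB K G M (f * MonoidAlgebra.of K G g) (pr K h • m)
        = bilinB K G M (f * MonoidAlgebra.of K G (g * h)) (eK K h⁻¹ • m) := by
    intro f g h m
    induction f using MonoidAlgebra.induction_linear with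
    | zero => simp
    | add a b ha hb => simp only [add_mul, map_add, LinearMap.add_apply, ha, hb]
    | single g' c =>
        have h1 : (MonoidAlgebra.single g' c : MonoidAlgebra K G) * MonoidAlgebra.of K G g
            = MonoidAlgebra.single (g' * g) (c * 1) := by
            rw [MonoidAlgebra.of_apply, MonoidAlgebra.single_mul_single]
        have h2 : (MonoidAlgebra.single g' c : MonoidAlgebra K G) * MonoidAlgebra.of K G (g * h)
            = MonoidAlgebra.single (g' * (g * h)) (c * 1) := by
            rw [MonoidAlgebra.of_apply, MonoidAlgebra.single_mul_single]
        rw [h1, h2, bilinB_single, bilinB_single]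
        rw [smul_smul (pr K (g' * g)) (pr K h) m, pr_key (g' * g) h,
          mul_assoc g' g h, ← smul_smul]
        simp [mul_smul]
  -- τ₀ kills the relation submodule
  have hker : ∀ x ∈ glueRel K G M, τ₀ x = 0 := by
    intro x hx
    have main : ∀ x ∈ glueRel K G M, ∀ f : KG K G, τ₀ (f • x) = 0 := by
      intro x hx
      refine Submodule.span_induction ?_ ?_ ?_ ?_ hx
      · rintro w ⟨g, h, m, rfl⟩ f
        rw [smul_sub, map_sub, TensorProduct.smul_tmul', TensorProduct.smul_tmul',
          smul_eq_mul, smul_eq_mul, hτ₀, TensorProduct.lift.tmul, TensorProduct.lift.tmul,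
          hgen f g h m, sub_self]
      · intro f; simp
      · intro a b _ _ ha hb f
        rw [smul_add, map_add, ha f, hb f, add_zero]
      · intro r a _ ha f
        rw [smul_smul, ha (f * r)]
    simpa using main x hx 1
  have hle : (glueRel K G M).restrictScalars K ≤ LinearMap.ker τ₀ := by
    intro x hx
    exact LinearMap.mem_ker.mpr (hker x hx)
  refine ⟨(Submodule.liftQ ((glueRel K G M).restrictScalars K) τ₀ hle).comp
      (Submodule.Quotient.restrictScalarsEquiv K (glueRel K G M)).symm.toLinearMap, ?_, ?_⟩
  · intro g m
    rw [LinearMap.comp_apply, LinearEquiv.coe_toLinearMap,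
      Submodule.Quotient.restrictScalarsEquiv_symm_mk, Submodule.liftQ_apply, hof]
  · intro m
    rw [LinearMap.comp_apply, LinearEquiv.coe_toLinearMap,
      Submodule.Quotient.restrictScalarsEquiv_symm_mk, Submodule.liftQ_apply]
    have h1 : (1 : KG K G) = MonoidAlgebra.single (1 : G) 1 := rfl
    rw [hτ₀, TensorProduct.lift.tmul, h1, bilinB_single, one_smul]
    have : pr K (1 : G) = 1 := by
      rw [pr, ExelMonoid.of_one, map_one]
    rw [this, one_smul]
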